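/- For each n ∈ ℕ with n ≥ 1, let σ̄(n) denote the infimum of σ(B(λ)) over λ ∈ Λ_n (which is attained). Then σ̄(n) → 2 as n → ∞. -/

import Mathlib

open Real

/-- The `(n+2) × (n+2)` symmetric tridiagonal matrix `B(λ)` with zero diagonal and
entries `λ_{j}^{-1/2}` on the sub/super-diagonals (0-based indexing: the entry in
positions `(i, i+1)` and `(i+1, i)` is `(l i)^{-1/2}` for `i = 0, …, n`). -/
noncomputable def Bmat (n : ℕ) (l : Fin (n+1) → ℝ) :
    Matrix (Fin (n+2)) (Fin (n+2)) ℝ :=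
  Matrix.of fun i j =>
    if h1 : (i : ℕ) + 1 = (j : ℕ) then
      l ⟨(i : ℕ), by have := j.isLt; omega⟩ ^ (-(1/2) : ℝ)
    else if h2 : (j : ℕ) + 1 = (i : ℕ) then
      l ⟨(j : ℕ), by have := i.isLt; omega⟩ ^ (-(1/2) : ℝ)
    else 0

/-- The largest eigenvalue (Perron root) of `B(λ)`. -/
noncomputable def sigmaB (n : ℕ) (l : Fin (n+1) → ℝ) : ℝ :=
  sSup {μ : ℝ | ∃ v : Fin (n+2) → ℝ, v ≠ 0 ∧ (Bmat n l).mulVec v = μ • v}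

/-- The feasible set `Λ_n`: all entries positive and `(1/(n+1)) ∑ λ_i ≤ 1`. -/
def Feasible (n : ℕ) (l : Fin (n+1) → ℝ) : Prop :=
  (∀ i, 0 < l i) ∧ (∑ i, l i) / ((n : ℝ) + 1) ≤ 1

/-- `λ̄` is a minimizer of `σ(B(·))` over `Λ_n`. -/
def IsMinimizer (n : ℕ) (l : Fin (n+1) → ℝ) : Prop :=
  Feasible n l ∧ ∀ m : Fin (n+1) → ℝ, Feasible n m → sigmaB n l ≤ sigmaB n m

/-- A Perron vector of `B(λ)`: positive entries, Euclidean norm one,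
eigenvector for the Perron root. -/
def IsPerronVector (n : ℕ) (l : Fin (n+1) → ℝ) (v : Fin (n+2) → ℝ) : Prop :=
  (∀ i, 0 < v i) ∧ (∑ i, v i ^ 2) = 1 ∧ (Bmat n l).mulVec v = sigmaB n l • v

section Stmt17Aux

open Finset Matrix

variable {n : ℕ}


variable {n : ℕ}

noncomputable def Wt (n : ℕ) (l : Fin (n+1) → ℝ) (t : Fin (n+1)) : ℝ := l t ^ (-(1/2) : ℝ)

noncomputable def Wt' (n : ℕ) (l : Fin (n+1) → ℝ) (k : ℕ) : ℝ :=
  if h : k < n+1 then Wt n l ⟨k, h⟩ else 0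

lemma Bmat_apply (l : Fin (n+1) → ℝ) (i j : Fin (n+2)) :
    Bmat n l i j = (if (i:ℕ) + 1 = (j:ℕ) then Wt' n l i else 0)
      + (if (j:ℕ) + 1 = (i:ℕ) then Wt' n l j else 0) := by
  have hi := i.isLt
  have hj := j.isLt
  unfold Bmat Wt' Wt
  rw [Matrix.of_apply]
  split_ifs with h1 h2 h3 h4 h5 <;> simp_all <;> omega

lemma quadForm (l : Fin (n+1) → ℝ) (x y : Fin (n+2) → ℝ) :
    x ⬝ᵥ (Bmat n l).mulVec y
      = ∑ t : Fin (n+1), Wt n l t * (x t.castSucc * y t.succ + x t.succ * y t.castSucc) := by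
  have key : x ⬝ᵥ (Bmat n l).mulVec y
      = ∑ i : Fin (n+2), ∑ j : Fin (n+2),
          ((if (i:ℕ) + 1 = (j:ℕ) then x i * (Wt' n l i * y j) else 0)
            + (if (j:ℕ) + 1 = (i:ℕ) then x i * (Wt' n l j * y j) else 0)) := by
    simp only [dotProduct, Matrix.mulVec, dotProduct, Finset.mul_sum]
    refine Finset.sum_congr rfl fun i _ => Finset.sum_congr rfl fun j _ => ?_
    rw [Bmat_apply]
    split_ifs <;> ring
  rw [key]
  simp only [Finset.sum_add_distrib]
  have h1 : ∑ i : Fin (n+2), ∑ j : Fin (n+2),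
      (if (i:ℕ) + 1 = (j:ℕ) then x i * (Wt' n l i * y j) else 0)
      = ∑ t : Fin (n+1), x t.castSucc * (Wt n l t * y t.succ) := by
    rw [Fin.sum_univ_castSucc]
    have hlast : ∑ j : Fin (n+2),
        (if ((Fin.last (n+1) : Fin (n+2)):ℕ) + 1 = (j:ℕ)
          then x (Fin.last (n+1)) * (Wt' n l (Fin.last (n+1)) * y j) else 0) = 0 := by
      refine Finset.sum_eq_zero fun j _ => ?_
      have := j.isLt
      rw [if_neg]
      simp only [Fin.val_last]
      omega
    rw [hlast, add_zero]
    refine Finset.sum_congr rfl fun t _ => ?_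
    have hcond : ∀ j : Fin (n+2),
        (((t.castSucc : Fin (n+2)):ℕ) + 1 = (j:ℕ)) = (t.succ = j) := by
      intro j
      apply propext
      constructor
      · intro h
        apply Fin.ext
        simp only [Fin.val_succ]
        simp only [Fin.coe_castSucc] at h
        omega
      · intro h; subst h; simp
    calc ∑ j : Fin (n+2), (if ((t.castSucc : Fin (n+2)):ℕ) + 1 = (j:ℕ)
            then x t.castSucc * (Wt' n l t.castSucc * y j) else 0)
        = ∑ j : Fin (n+2), (if t.succ = j
            then x t.castSucc * (Wt' n l t.castSucc * y j) else 0) := by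
          refine Finset.sum_congr rfl fun j _ => ?_
          simp only [hcond]
      _ = x t.castSucc * (Wt' n l t.castSucc * y t.succ) := by
          rw [Finset.sum_ite_eq]
          simp
      _ = x t.castSucc * (Wt n l t * y t.succ) := by
          have : Wt' n l t.castSucc = Wt n l t := by
            have ht : ((t.castSucc : Fin (n+2)) : ℕ) < n+1 := by have := t.isLt; simp; omega
            simp only [Wt', dif_pos ht]
            exact congrArg (Wt n l) (Fin.ext (by simp))
          rw [this]
  have h2 : ∑ i : Fin (n+2), ∑ j : Fin (n+2),
      (if (j:ℕ) + 1 = (i:ℕ) then x i * (Wt' n l j * y j) else 0)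
      = ∑ t : Fin (n+1), x t.succ * (Wt n l t * y t.castSucc) := by
    rw [Finset.sum_comm]
    rw [Fin.sum_univ_castSucc]
    have hlast : ∑ i : Fin (n+2),
        (if ((Fin.last (n+1) : Fin (n+2)):ℕ) + 1 = (i:ℕ)
          then x i * (Wt' n l (Fin.last (n+1)) * y (Fin.last (n+1))) else 0) = 0 := by
      refine Finset.sum_eq_zero fun i _ => ?_
      have := i.isLt
      rw [if_neg]
      simp only [Fin.val_last]
      omega
    rw [hlast, add_zero]
    refine Finset.sum_congr rfl fun t _ => ?_
    have hcond : ∀ i : Fin (n+2),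
        (((t.castSucc : Fin (n+2)):ℕ) + 1 = (i:ℕ)) = (t.succ = i) := by
      intro i
      apply propext
      constructor
      · intro h
        apply Fin.ext
        simp only [Fin.val_succ]
        simp only [Fin.coe_castSucc] at h
        omega
      · intro h; subst h; simp
    calc ∑ i : Fin (n+2), (if ((t.castSucc : Fin (n+2)):ℕ) + 1 = (i:ℕ)
            then x i * (Wt' n l t.castSucc * y t.castSucc) else 0)
        = ∑ i : Fin (n+2), (if t.succ = i
            then x i * (Wt' n l t.castSucc * y t.castSucc) else 0) := by
          refine Finset.sum_congr rfl fun i _ => ?_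
          simp only [hcond]
      _ = x t.succ * (Wt' n l t.castSucc * y t.castSucc) := by
          rw [Finset.sum_ite_eq]
          simp
      _ = x t.succ * (Wt n l t * y t.castSucc) := by
          have : Wt' n l t.castSucc = Wt n l t := by
            have ht : ((t.castSucc : Fin (n+2)) : ℕ) < n+1 := by have := t.isLt; simp; omega
            simp only [Wt', dif_pos ht]
            exact congrArg (Wt n l) (Fin.ext (by simp))
          rw [this]
  rw [h1, h2, ← Finset.sum_add_distrib]
  refine Finset.sum_congr rfl fun t _ => by ring

lemma Bmat_isHermitian (l : Fin (n+1) → ℝ) : (Bmat n l).IsHermitian := by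
  ext i j
  simp only [Matrix.conjTranspose_apply, star_trivial]
  rw [Bmat_apply, Bmat_apply]
  exact add_comm _ _


def Esig (n : ℕ) (l : Fin (n+1) → ℝ) : Set ℝ :=
  {μ : ℝ | ∃ v : Fin (n+2) → ℝ, v ≠ 0 ∧ (Bmat n l).mulVec v = μ • v}

lemma dot_self_pos {m : ℕ} {v : Fin m → ℝ} (hv : v ≠ 0) : 0 < v ⬝ᵥ v := by
  have h0 : v ⬝ᵥ v ≠ 0 := fun h => hv (dotProduct_self_eq_zero.mp h)
  have h1 : 0 ≤ v ⬝ᵥ v := Finset.sum_nonneg fun i _ => mul_self_nonneg _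
  exact lt_of_le_of_ne h1 (Ne.symm h0)

lemma sum_sq_castSucc_le (v : Fin (n+2) → ℝ) :
    ∑ t : Fin (n+1), v t.castSucc ^ 2 ≤ ∑ i, v i ^ 2 := by
  rw [Fin.sum_univ_castSucc (f := fun i => v i ^ 2)]
  exact le_add_of_nonneg_right (sq_nonneg _)

lemma sum_sq_succ_le (v : Fin (n+2) → ℝ) :
    ∑ t : Fin (n+1), v t.succ ^ 2 ≤ ∑ i, v i ^ 2 := by
  rw [Fin.sum_univ_succ (f := fun i => v i ^ 2)]
  exact le_add_of_nonneg_left (sq_nonneg _)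

lemma abs_le_of_mem_Esig {l : Fin (n+1) → ℝ} {μ : ℝ} (hμ : μ ∈ Esig n l)
    {M : ℝ} (hM : ∀ t, |Wt n l t| ≤ M) : |μ| ≤ 2 * M := by
  obtain ⟨v, hv0, hveq⟩ := hμ
  have hvv : 0 < v ⬝ᵥ v := dot_self_pos hv0
  have hM0 : 0 ≤ M := le_trans (abs_nonneg _) (hM 0)
  have hvsq : v ⬝ᵥ v = ∑ i, v i ^ 2 := by
    simp [dotProduct, sq]
  have hquad : μ * (v ⬝ᵥ v)
      = ∑ t, Wt n l t * (v t.castSucc * v t.succ + v t.succ * v t.castSucc) := by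
    rw [← quadForm, hveq, dotProduct_smul, smul_eq_mul, mul_comm]
  have hbound : |μ * (v ⬝ᵥ v)| ≤ M * (2 * (v ⬝ᵥ v)) := by
    rw [hquad]
    calc |∑ t : Fin (n+1), Wt n l t * (v t.castSucc * v t.succ + v t.succ * v t.castSucc)|
        ≤ ∑ t : Fin (n+1), |Wt n l t * (v t.castSucc * v t.succ + v t.succ * v t.castSucc)| :=
          Finset.abs_sum_le_sum_abs _ _
      _ ≤ ∑ t : Fin (n+1), M * (v t.castSucc ^ 2 + v t.succ ^ 2) := by
          refine Finset.sum_le_sum fun t _ => ?_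
          rw [abs_mul]
          have h2 : |v t.castSucc * v t.succ + v t.succ * v t.castSucc|
              ≤ v t.castSucc ^ 2 + v t.succ ^ 2 := by
            have habs : |v t.castSucc * v t.succ + v t.succ * v t.castSucc|
                = 2 * (|v t.castSucc| * |v t.succ|) := by
              rw [show v t.castSucc * v t.succ + v t.succ * v t.castSucc
                  = 2 * (v t.castSucc * v t.succ) by ring, abs_mul, abs_mul, abs_two]
            rw [habs]
            nlinarith [sq_nonneg (|v t.castSucc| - |v t.succ|), sq_abs (v t.castSucc),
              sq_abs (v t.succ)]
          exact mul_le_mul (hM t) h2 (abs_nonneg _) hM0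
      _ = M * (∑ t : Fin (n+1), v t.castSucc ^ 2 + ∑ t : Fin (n+1), v t.succ ^ 2) := by
          rw [← Finset.sum_add_distrib, Finset.mul_sum]
      _ ≤ M * (2 * (v ⬝ᵥ v)) := by
          rw [hvsq]
          nlinarith [sum_sq_castSucc_le v, sum_sq_succ_le v]
  rw [abs_mul, abs_of_pos hvv] at hbound
  have h2' : |μ| * (v ⬝ᵥ v) ≤ (2 * M) * (v ⬝ᵥ v) := by linarith
  exact le_of_mul_le_mul_right h2' hvv

lemma coe_eigvec_ne_zero {l : Fin (n+1) → ℝ} (hA : (Bmat n l).IsHermitian) (j : Fin (n+2)) :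
    (⇑(hA.eigenvectorBasis j) : Fin (n+2) → ℝ) ≠ 0 := by
  intro h
  apply hA.eigenvectorBasis.orthonormal.ne_zero j
  ext k
  exact congrFun h k

lemma nonempty_Esig (l : Fin (n+1) → ℝ) : (Esig n l).Nonempty := by
  have hA := Bmat_isHermitian l
  exact ⟨hA.eigenvalues 0, ⇑(hA.eigenvectorBasis 0), coe_eigvec_ne_zero hA 0,
    hA.mulVec_eigenvectorBasis 0⟩

lemma rayleigh_le (l : Fin (n+1) → ℝ) (hbdd : BddAbove (Esig n l)) (x : Fin (n+2) → ℝ) :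
    x ⬝ᵥ (Bmat n l).mulVec x ≤ sSup (Esig n l) * (x ⬝ᵥ x) := by
  classical
  have hA := Bmat_isHermitian l
  set e := hA.eigenvectorBasis with he
  set μ : Fin (n+2) → ℝ := hA.eigenvalues with hμdef
  set u : Fin (n+2) → Fin (n+2) → ℝ := fun i => ⇑(e i) with hu
  have horth : ∀ i j, ∑ k, u i k * u j k = if i = j then 1 else 0 := by
    intro i j
    have h := orthonormal_iff_ite.mp e.orthonormal i j
    rw [Finset.sum_congr rfl fun k _ => mul_comm (u i k) (u j k)]
    simpa [PiLp.inner_apply, RCLike.inner_apply, starRingEnd_apply, u] using h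
  have heig : ∀ j, (Bmat n l).mulVec (u j) = μ j • u j := fun j =>
    hA.mulVec_eigenvectorBasis j
  have hmem : ∀ j, μ j ∈ Esig n l := fun j => ⟨u j, coe_eigvec_ne_zero hA j, heig j⟩
  have hle : ∀ j, μ j ≤ sSup (Esig n l) := fun j => le_csSup hbdd (hmem j)
  set X : EuclideanSpace ℝ (Fin (n+2)) := (WithLp.equiv 2 (Fin (n+2) → ℝ)).symm x with hX
  set c : Fin (n+2) → ℝ := fun i => e.repr X i with hc
  have hsum : ∀ k, x k = ∑ i, c i * u i k := by
    intro k
    have hrepr := congrArg (WithLp.linearEquiv 2 ℝ (Fin (n+2) → ℝ)) (e.sum_repr X)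
    rw [map_sum] at hrepr
    have h2 := congrFun hrepr k
    simp only [Finset.sum_apply, _root_.map_smul, WithLp.linearEquiv_apply, Pi.smul_apply,
      smul_eq_mul, Equiv.apply_symm_apply, hX] at h2
    exact h2.symm
  have hui : ∀ i, ∑ k, u i k * x k = c i := by
    intro i
    calc ∑ k, u i k * x k = ∑ k, ∑ j, c j * (u i k * u j k) := by
          refine Finset.sum_congr rfl fun k _ => ?_
          rw [hsum k, Finset.mul_sum]
          exact Finset.sum_congr rfl fun j _ => by ring
      _ = ∑ j, ∑ k, c j * (u i k * u j k) := Finset.sum_comm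
      _ = ∑ j, c j * (if i = j then 1 else 0) := by
          refine Finset.sum_congr rfl fun j _ => ?_
          rw [← Finset.mul_sum, horth i j]
      _ = c i := by simp
  have hmv : (Bmat n l).mulVec x = fun k => ∑ i, c i * (μ i * u i k) := by
    funext k
    simp only [Matrix.mulVec, dotProduct]
    calc ∑ j, Bmat n l k j * x j = ∑ j, ∑ i, c i * (Bmat n l k j * u i j) := by
          refine Finset.sum_congr rfl fun j _ => ?_
          rw [hsum j, Finset.mul_sum]
          exact Finset.sum_congr rfl fun i _ => by ring
      _ = ∑ i, ∑ j, c i * (Bmat n l k j * u i j) := Finset.sum_comm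
      _ = ∑ i, c i * (μ i * u i k) := by
          refine Finset.sum_congr rfl fun i _ => ?_
          have hik : ∑ j, Bmat n l k j * u i j = μ i * u i k := by
            have h := congrFun (heig i) k
            simpa [Matrix.mulVec, dotProduct, Pi.smul_apply, smul_eq_mul] using h
          rw [← Finset.mul_sum, hik]
  have hxBx : x ⬝ᵥ (Bmat n l).mulVec x = ∑ i, μ i * c i ^ 2 := by
    rw [hmv]
    simp only [dotProduct]
    calc ∑ k, x k * ∑ i, c i * (μ i * u i k)
        = ∑ k, ∑ i, (c i * μ i) * (u i k * x k) := by
          refine Finset.sum_congr rfl fun k _ => ?_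
          rw [Finset.mul_sum]
          exact Finset.sum_congr rfl fun i _ => by ring
      _ = ∑ i, ∑ k, (c i * μ i) * (u i k * x k) := Finset.sum_comm
      _ = ∑ i, μ i * c i ^ 2 := by
          refine Finset.sum_congr rfl fun i _ => ?_
          rw [← Finset.mul_sum, hui i]
          ring
  have hxx : x ⬝ᵥ x = ∑ i, c i ^ 2 := by
    simp only [dotProduct]
    calc ∑ k, x k * x k = ∑ k, ∑ i, c i * (u i k * x k) := by
          refine Finset.sum_congr rfl fun k _ => ?_
          have hstep : x k * x k = (∑ i, c i * u i k) * x k := by rw [← hsum k]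
          rw [hstep, Finset.sum_mul]
          exact Finset.sum_congr rfl fun i _ => by ring
      _ = ∑ i, ∑ k, c i * (u i k * x k) := Finset.sum_comm
      _ = ∑ i, c i ^ 2 := by
          refine Finset.sum_congr rfl fun i _ => ?_
          rw [← Finset.mul_sum, hui i]
          ring
  rw [hxBx, hxx, Finset.mul_sum]
  exact Finset.sum_le_sum fun i _ =>
    mul_le_mul_of_nonneg_right (hle i) (sq_nonneg _)


lemma sigmaB_eq (l : Fin (n+1) → ℝ) : sigmaB n l = sSup (Esig n l) := rfl

lemma abs_cross_le (p q : ℝ) : |p * q + q * p| ≤ p ^ 2 + q ^ 2 := by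
  rw [show p * q + q * p = 2 * (p * q) by ring, abs_mul, abs_two, abs_mul]
  nlinarith [sq_nonneg (|p| - |q|), sq_abs p, sq_abs q]

lemma bddAbove_Esig (l : Fin (n+1) → ℝ) : BddAbove (Esig n l) := by
  refine ⟨2 * ∑ t, |Wt n l t|, fun μ hμ => ?_⟩
  have hM : ∀ t, |Wt n l t| ≤ ∑ t, |Wt n l t| := fun t =>
    Finset.single_le_sum (f := fun s => |Wt n l s|) (fun s _ => abs_nonneg _) (Finset.mem_univ t)
  exact le_trans (le_abs_self μ) (abs_le_of_mem_Esig hμ hM)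

lemma sigma_le_of_bound (l : Fin (n+1) → ℝ) {M : ℝ} (hM : ∀ t, |Wt n l t| ≤ M) :
    sigmaB n l ≤ 2 * M := by
  rw [sigmaB_eq]
  exact csSup_le (nonempty_Esig l) fun _ hμ => le_trans (le_abs_self _) (abs_le_of_mem_Esig hμ hM)

lemma sigma_rayleigh (l : Fin (n+1) → ℝ) (x : Fin (n+2) → ℝ) :
    x ⬝ᵥ (Bmat n l).mulVec x ≤ sigmaB n l * (x ⬝ᵥ x) := by
  rw [sigmaB_eq]
  exact rayleigh_le l (bddAbove_Esig l) x

lemma sigma_lipschitz (l l' : Fin (n+1) → ℝ) :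
    sigmaB n l ≤ sigmaB n l' + 2 * ∑ t, |Wt n l t - Wt n l' t| := by
  rw [sigmaB_eq]
  refine csSup_le (nonempty_Esig l) fun μ hμ => ?_
  obtain ⟨v, hv0, hveq⟩ := hμ
  have hvv := dot_self_pos hv0
  have hvsq : v ⬝ᵥ v = ∑ i, v i ^ 2 := by simp [dotProduct, sq]
  have hquad : μ * (v ⬝ᵥ v) = v ⬝ᵥ (Bmat n l).mulVec v := by
    rw [hveq, dotProduct_smul, smul_eq_mul, mul_comm]
  have hdiff : v ⬝ᵥ (Bmat n l).mulVec v - v ⬝ᵥ (Bmat n l').mulVec v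
      = ∑ t : Fin (n+1), (Wt n l t - Wt n l' t)
          * (v t.castSucc * v t.succ + v t.succ * v t.castSucc) := by
    rw [quadForm, quadForm, ← Finset.sum_sub_distrib]
    exact Finset.sum_congr rfl fun t _ => by ring
  have hD : v ⬝ᵥ (Bmat n l).mulVec v - v ⬝ᵥ (Bmat n l').mulVec v
      ≤ (∑ t : Fin (n+1), |Wt n l t - Wt n l' t|) * (2 * (v ⬝ᵥ v)) := by
    rw [hdiff, Finset.sum_mul]
    refine Finset.sum_le_sum fun t _ => ?_
    have hs := abs_cross_le (v t.castSucc) (v t.succ)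
    have h2 : v t.castSucc ^ 2 ≤ v ⬝ᵥ v := by
      rw [hvsq]
      exact Finset.single_le_sum (f := fun i => v i ^ 2) (fun i _ => sq_nonneg _)
        (Finset.mem_univ _)
    have h3 : v t.succ ^ 2 ≤ v ⬝ᵥ v := by
      rw [hvsq]
      exact Finset.single_le_sum (f := fun i => v i ^ 2) (fun i _ => sq_nonneg _)
        (Finset.mem_univ _)
    calc (Wt n l t - Wt n l' t) * (v t.castSucc * v t.succ + v t.succ * v t.castSucc)
        ≤ |(Wt n l t - Wt n l' t) * (v t.castSucc * v t.succ + v t.succ * v t.castSucc)| :=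
          le_abs_self _
      _ = |Wt n l t - Wt n l' t| * |v t.castSucc * v t.succ + v t.succ * v t.castSucc| :=
          abs_mul _ _
      _ ≤ |Wt n l t - Wt n l' t| * (2 * (v ⬝ᵥ v)) := by
          refine mul_le_mul_of_nonneg_left ?_ (abs_nonneg _)
          calc |v t.castSucc * v t.succ + v t.succ * v t.castSucc|
              ≤ v t.castSucc ^ 2 + v t.succ ^ 2 := hs
            _ ≤ 2 * (v ⬝ᵥ v) := by linarith
  have hray := sigma_rayleigh l' v
  have hfin : μ * (v ⬝ᵥ v)
      ≤ (sigmaB n l' + 2 * ∑ t : Fin (n+1), |Wt n l t - Wt n l' t|) * (v ⬝ᵥ v) := by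
    have : μ * (v ⬝ᵥ v) ≤ sigmaB n l' * (v ⬝ᵥ v)
        + (∑ t : Fin (n+1), |Wt n l t - Wt n l' t|) * (2 * (v ⬝ᵥ v)) := by
      rw [hquad]; linarith
    nlinarith [this]
  exact le_of_mul_le_mul_right hfin hvv

lemma sum_Wt_ge (l : Fin (n+1) → ℝ) (hpos : ∀ i, 0 < l i) (hsum : ∑ i, l i ≤ (n:ℝ)+1) :
    (n:ℝ)+1 ≤ ∑ t, Wt n l t := by
  have hcardR : ∑ _t : Fin (n+1), (1:ℝ) = (n:ℝ)+1 := by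
    simp [Finset.sum_const]
  have hB0 : 0 ≤ ∑ t, Wt n l t :=
    Finset.sum_nonneg fun t _ => Real.rpow_nonneg (hpos t).le _
  have h1 : ((n:ℝ)+1) ^ 2 ≤ (∑ t, l t ^ ((1:ℝ)/2)) * ∑ t, Wt n l t := by
    have hcs := Finset.sum_mul_sq_le_sq_mul_sq Finset.univ
      (fun t => l t ^ ((1:ℝ)/4)) (fun t => l t ^ (-(1:ℝ)/4))
    have hprod : ∀ t : Fin (n+1), l t ^ ((1:ℝ)/4) * l t ^ (-(1:ℝ)/4) = 1 := by
      intro t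
      rw [← Real.rpow_add (hpos t)]
      norm_num
    have hsq1 : ∀ t : Fin (n+1), (l t ^ ((1:ℝ)/4)) ^ 2 = l t ^ ((1:ℝ)/2) := by
      intro t
      rw [← Real.rpow_natCast (l t ^ ((1:ℝ)/4)) 2, ← Real.rpow_mul (hpos t).le]
      norm_num
    have hsq2 : ∀ t : Fin (n+1), (l t ^ (-(1:ℝ)/4)) ^ 2 = Wt n l t := by
      intro t
      rw [← Real.rpow_natCast (l t ^ (-(1:ℝ)/4)) 2, ← Real.rpow_mul (hpos t).le]
      norm_num [Wt]
    simp only [hprod, hsq1, hsq2] at hcs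
    rw [hcardR] at hcs
    exact hcs
  have h2 : ∑ t, l t ^ ((1:ℝ)/2) ≤ (n:ℝ)+1 := by
    have hcs2 := Finset.sum_mul_sq_le_sq_mul_sq Finset.univ
      (fun t => l t ^ ((1:ℝ)/2)) (fun _ => (1:ℝ))
    have hsq : ∀ t : Fin (n+1), (l t ^ ((1:ℝ)/2)) ^ 2 = l t := by
      intro t
      rw [← Real.rpow_natCast (l t ^ ((1:ℝ)/2)) 2, ← Real.rpow_mul (hpos t).le]
      norm_num
    simp only [mul_one, one_pow, hsq] at hcs2
    rw [hcardR] at hcs2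
    have hA0 : 0 ≤ ∑ t, l t ^ ((1:ℝ)/2) :=
      Finset.sum_nonneg fun t _ => Real.rpow_nonneg (hpos t).le _
    have hn1 : (0:ℝ) < (n:ℝ)+1 := by positivity
    nlinarith [mul_le_mul_of_nonneg_right hsum hn1.le]
  have hn1 : (0:ℝ) < (n:ℝ)+1 := by positivity
  nlinarith [mul_le_mul_of_nonneg_right h2 hB0]

lemma sigma_lower (l : Fin (n+1) → ℝ) (hpos : ∀ i, 0 < l i) (hsum : ∑ i, l i ≤ (n:ℝ)+1) :
    2 * ((n:ℝ)+1) ≤ sigmaB n l * ((n:ℝ)+2) := by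
  have hray := sigma_rayleigh l (fun _ => (1:ℝ))
  have hq : (fun _ => (1:ℝ)) ⬝ᵥ (Bmat n l).mulVec (fun _ => (1:ℝ)) = 2 * ∑ t, Wt n l t := by
    rw [quadForm]
    rw [Finset.mul_sum]
    exact Finset.sum_congr rfl fun t _ => by ring
  have hx : (fun _ => (1:ℝ)) ⬝ᵥ (fun _ : Fin (n+2) => (1:ℝ)) = (n:ℝ)+2 := by
    simp [dotProduct]
  rw [hq, hx] at hray
  have := sum_Wt_ge l hpos hsum
  linarith

lemma sigma_one_le_two : sigmaB n (fun _ => (1:ℝ)) ≤ 2 := by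
  have hb : ∀ t : Fin (n+1), |Wt n (fun _ => (1:ℝ)) t| ≤ 1 := by
    intro t
    simp [Wt, Real.one_rpow]
  have h := sigma_le_of_bound (n := n) (fun _ => (1:ℝ)) hb
  linarith

lemma sigma_spike (l : Fin (n+1) → ℝ) (hpos : ∀ i, 0 < l i) (i : Fin (n+1))
    (hi : l i ≤ 1/9) : 3 ≤ sigmaB n l := by
  classical
  set x : Fin (n+2) → ℝ := fun k =>
    (if k = i.castSucc then (1:ℝ) else 0) + (if k = i.succ then 1 else 0) with hxdef
  have hne : (i.castSucc : Fin (n+2)) ≠ i.succ := ne_of_lt (Fin.castSucc_lt_succ : i.castSucc < i.succ)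
  have hx0 : ∀ k, 0 ≤ x k := by
    intro k
    apply add_nonneg <;> split <;> norm_num
  have hxcast : x i.castSucc = 1 := by simp [hxdef, hne]
  have hxsucc : x i.succ = 1 := by simp [hxdef, Ne.symm hne]
  have hxx : x ⬝ᵥ x = 2 := by
    simp only [dotProduct]
    have hterm : ∀ k, x k * x k
        = (if k = i.castSucc then (1:ℝ) else 0) + (if k = i.succ then 1 else 0) := by
      intro k
      by_cases h1 : k = i.castSucc <;> by_cases h2 : k = i.succ
      · exact absurd (h1.symm.trans h2) hne
      · simp [hxdef, h1, h2, hne, Ne.symm hne]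
      · simp [hxdef, h1, h2, hne, Ne.symm hne]
      · simp [hxdef, h1, h2, hne, Ne.symm hne]
    rw [Finset.sum_congr rfl fun k _ => hterm k, Finset.sum_add_distrib]
    simp [Finset.sum_ite_eq']
    norm_num
  have hquad : 2 * Wt n l i ≤ x ⬝ᵥ (Bmat n l).mulVec x := by
    rw [quadForm]
    have hterm_nonneg : ∀ t : Fin (n+1), 0 ≤ Wt n l t
        * (x t.castSucc * x t.succ + x t.succ * x t.castSucc) := by
      intro t
      apply mul_nonneg (Real.rpow_nonneg (hpos t).le _)
      have := hx0 t.castSucc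
      have := hx0 t.succ
      positivity
    have hsingle := Finset.single_le_sum (fun t _ => hterm_nonneg t) (Finset.mem_univ i)
    rw [hxcast, hxsucc] at hsingle
    calc 2 * Wt n l i = Wt n l i * (1 * 1 + 1 * 1) := by ring
      _ ≤ _ := hsingle
  have hW : 3 ≤ Wt n l i := by
    have hWeq : Wt n l i = (l i ^ ((1:ℝ)/2))⁻¹ := by
      rw [Wt, show (-(1/2):ℝ) = -((1:ℝ)/2) by norm_num, Real.rpow_neg (hpos i).le]
    have h13 : ((1:ℝ)/9) ^ ((1:ℝ)/2) = 1/3 := by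
      rw [show ((1:ℝ)/9) = ((1:ℝ)/3) ^ (2:ℕ) by norm_num,
        ← Real.rpow_natCast ((1:ℝ)/3) 2, ← Real.rpow_mul (by norm_num)]
      norm_num
    have hle : l i ^ ((1:ℝ)/2) ≤ 1/3 := by
      calc l i ^ ((1:ℝ)/2) ≤ ((1:ℝ)/9) ^ ((1:ℝ)/2) :=
            Real.rpow_le_rpow (hpos i).le hi (by norm_num)
        _ = 1/3 := h13
    have hpos2 : 0 < l i ^ ((1:ℝ)/2) := Real.rpow_pos_of_pos (hpos i) _
    rw [hWeq]
    calc (3:ℝ) = ((1:ℝ)/3)⁻¹ := by norm_num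
      _ ≤ (l i ^ ((1:ℝ)/2))⁻¹ := by
        apply inv_anti₀ hpos2 hle
  have hray := sigma_rayleigh l x
  rw [hxx] at hray
  linarith


lemma sigma_continuousOn :
    ContinuousOn (fun l => sigmaB n l) {l : Fin (n+1) → ℝ | ∀ i, 0 < l i} := by
  set P := {l : Fin (n+1) → ℝ | ∀ i, 0 < l i} with hP
  intro l0 hl0
  have hWcont : ∀ t : Fin (n+1),
      ContinuousAt (fun l : Fin (n+1) → ℝ => Wt n l t) l0 := by
    intro t
    have h1 : ContinuousAt (fun y : ℝ => y ^ (-(1/2) : ℝ)) (l0 t) :=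
      Real.continuousAt_rpow_const (l0 t) _ (Or.inl (ne_of_gt (hl0 t)))
    have h2 := ContinuousAt.comp (g := fun y : ℝ => y ^ (-(1/2) : ℝ))
      (f := fun l : Fin (n+1) → ℝ => l t) (x := l0) h1 ((continuous_apply t).continuousAt)
    exact h2
  have hDcont : ContinuousAt (fun l : Fin (n+1) → ℝ =>
      2 * ∑ t, |Wt n l t - Wt n l0 t|) l0 := by
    apply ContinuousAt.mul continuousAt_const
    exact tendsto_finset_sum _ fun t _ => (((hWcont t).sub continuousAt_const).abs)
  have hbound : ∀ l, ‖sigmaB n l - sigmaB n l0‖ ≤ 2 * ∑ t, |Wt n l t - Wt n l0 t| := by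
    intro l
    rw [Real.norm_eq_abs, abs_sub_le_iff]
    constructor
    · have := sigma_lipschitz (n := n) l l0
      linarith
    · have h := sigma_lipschitz (n := n) l0 l
      have he : ∑ t, |Wt n l0 t - Wt n l t| = ∑ t, |Wt n l t - Wt n l0 t| :=
        Finset.sum_congr rfl fun t _ => abs_sub_comm _ _
      rw [he] at h
      linarith
  have hD0 : (2:ℝ) * ∑ t : Fin (n+1), |Wt n l0 t - Wt n l0 t| = 0 := by simp
  have htenD : Filter.Tendsto (fun l : Fin (n+1) → ℝ => 2 * ∑ t, |Wt n l t - Wt n l0 t|)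
      (nhdsWithin l0 P) (nhds 0) := by
    have h := (hDcont.continuousWithinAt (s := P)).tendsto
    rwa [hD0] at h
  have hten0 : Filter.Tendsto (fun l => sigmaB n l - sigmaB n l0)
      (nhdsWithin l0 P) (nhds 0) := squeeze_zero_norm hbound htenD
  have hfin := hten0.add (tendsto_const_nhds (x := sigmaB n l0))
  rw [zero_add] at hfin
  have : (fun l => sigmaB n l - sigmaB n l0 + sigmaB n l0) = fun l => sigmaB n l := by
    funext l
    ring
  rw [this] at hfin
  exact hfin

lemma exists_minimizer (n : ℕ) : ∃ l0 : Fin (n+1) → ℝ,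
    (∀ i, (1:ℝ)/9 ≤ l0 i) ∧ (∑ i, l0 i ≤ (n:ℝ)+1) ∧
    ∀ l : Fin (n+1) → ℝ, (∀ i, (1:ℝ)/9 ≤ l i) → (∑ i, l i ≤ (n:ℝ)+1) →
      sigmaB n l0 ≤ sigmaB n l := by
  classical
  set K := (Set.univ.pi fun _ : Fin (n+1) => Set.Icc ((1:ℝ)/9) ((n:ℝ)+1)) ∩
    {l : Fin (n+1) → ℝ | ∑ i, l i ≤ (n:ℝ)+1} with hK
  have hcomp : IsCompact K :=
    (isCompact_univ_pi fun _ => isCompact_Icc).inter_right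
      (isClosed_le (continuous_finset_sum _ fun i _ => continuous_apply i) continuous_const)
  have hKP : K ⊆ {l : Fin (n+1) → ℝ | ∀ i, 0 < l i} := by
    intro l hl i
    have h1 := (hl.1 i (Set.mem_univ i)).1
    have : (0:ℝ) < 1/9 := by norm_num
    exact lt_of_lt_of_le this h1
  have hn0 : (0:ℝ) ≤ (n:ℝ) := Nat.cast_nonneg n
  have hKne : K.Nonempty := by
    refine ⟨fun _ => 1, fun i _ => ?_, ?_⟩
    · rw [Set.mem_Icc]
      constructor
      · norm_num
      · show (1:ℝ) ≤ (n:ℝ)+1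
        linarith
    · show ∑ _i : Fin (n+1), (1:ℝ) ≤ (n:ℝ)+1
      simp
  obtain ⟨l0, hl0K, hmin⟩ := hcomp.exists_isMinOn hKne
    ((sigma_continuousOn (n := n)).mono hKP)
  refine ⟨l0, fun i => (hl0K.1 i (Set.mem_univ i)).1, hl0K.2, ?_⟩
  intro l h19 hsum
  have hlK : l ∈ K := by
    refine ⟨fun i _ => ⟨h19 i, ?_⟩, hsum⟩
    have hnn : ∀ j, (0:ℝ) ≤ l j := fun j => le_trans (by norm_num) (h19 j)
    calc l i ≤ ∑ j, l j := Finset.single_le_sum (fun j _ => hnn j) (Finset.mem_univ i)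
      _ ≤ (n:ℝ)+1 := hsum
  exact isMinOn_iff.mp hmin l hlK

lemma tendsto_lower : Filter.Tendsto (fun n : ℕ => 2 * ((n:ℝ)+1) / ((n:ℝ)+2))
    Filter.atTop (nhds 2) := by
  have h0 : Filter.Tendsto (fun n : ℕ => 2 / ((n:ℝ)+2)) Filter.atTop (nhds 0) := by
    have h1 := (tendsto_const_div_atTop_nhds_zero_nat (2:ℝ)).comp (Filter.tendsto_add_atTop_nat 2)
    have heq : ((fun k : ℕ => 2 / (k:ℝ)) ∘ fun n : ℕ => n + 2)
        = fun n : ℕ => 2 / ((n:ℝ)+2) := by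
      funext m
      simp only [Function.comp]
      push_cast
      ring
    rwa [heq] at h1
  have h2 : Filter.Tendsto (fun n : ℕ => 2 - 2 / ((n:ℝ)+2)) Filter.atTop (nhds (2 - 0)) :=
    tendsto_const_nhds.sub h0
  rw [sub_zero] at h2
  have heq : (fun n : ℕ => 2 - 2 / ((n:ℝ)+2)) = fun n : ℕ => 2 * ((n:ℝ)+1) / ((n:ℝ)+2) := by
    funext m
    have hpos : ((m:ℝ)+2) ≠ 0 := by positivity
    field_simp
    ring
  rwa [heq] at h2

end Stmt17Aux

/-- the optimal value `σ̄(n)` (the infimum of `σ(B(λ))` over `Λ_n`,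
which is attained) converges to `2` as `n → ∞`. -/
theorem stmt_17 :
    Filter.Tendsto
      (fun n : ℕ =>
        sInf {s : ℝ | ∃ l : Fin (n+1) → ℝ, Feasible n l ∧ sigmaB n l = s})
      Filter.atTop (nhds 2) ∧
    ∀ n : ℕ, 1 ≤ n → ∃ l : Fin (n+1) → ℝ, Feasible n l ∧
      sigmaB n l
        = sInf {s : ℝ | ∃ l' : Fin (n+1) → ℝ, Feasible n l' ∧ sigmaB n l' = s} := by
  classical
  have hfeas1 : ∀ m : ℕ, Feasible m (fun _ => 1) := by
    intro m
    constructor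
    · exact fun _ => one_pos
    · have h1 : ∑ _i : Fin (m+1), (1:ℝ) = (m:ℝ)+1 := by simp
      rw [h1, div_self (by positivity)]
  have hmem1 : ∀ m : ℕ, sigmaB m (fun _ => 1)
      ∈ {s : ℝ | ∃ l : Fin (m+1) → ℝ, Feasible m l ∧ sigmaB m l = s} :=
    fun m => ⟨fun _ => 1, hfeas1 m, rfl⟩
  have hlb : ∀ m : ℕ, ∀ s ∈ {s : ℝ | ∃ l : Fin (m+1) → ℝ, Feasible m l ∧ sigmaB m l = s},
      2 * ((m:ℝ)+1) / ((m:ℝ)+2) ≤ s := by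
    rintro m s ⟨l, hF, rfl⟩
    have hsum : ∑ i, l i ≤ (m:ℝ)+1 := by
      have h2 := hF.2
      rwa [div_le_one (by positivity)] at h2
    have h := sigma_lower l hF.1 hsum
    rw [div_le_iff₀ (by positivity)]
    linarith
  have hbdd : ∀ m : ℕ,
      BddBelow {s : ℝ | ∃ l : Fin (m+1) → ℝ, Feasible m l ∧ sigmaB m l = s} :=
    fun m => ⟨_, hlb m⟩
  have hne : ∀ m : ℕ,
      {s : ℝ | ∃ l : Fin (m+1) → ℝ, Feasible m l ∧ sigmaB m l = s}.Nonempty :=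
    fun m => ⟨_, hmem1 m⟩
  constructor
  · apply tendsto_of_tendsto_of_tendsto_of_le_of_le tendsto_lower
      (tendsto_const_nhds (x := (2:ℝ)))
    · intro m
      exact le_csInf (hne m) (hlb m)
    · intro m
      exact le_trans (csInf_le (hbdd m) (hmem1 m)) sigma_one_le_two
  · intro m _
    obtain ⟨l0, h19, hsum0, hmin⟩ := exists_minimizer m
    have hF0 : Feasible m l0 := by
      constructor
      · exact fun i => lt_of_lt_of_le (by norm_num) (h19 i)
      · rw [div_le_one (by positivity)]
        exact hsum0
    refine ⟨l0, hF0, le_antisymm ?_ (csInf_le (hbdd m) ⟨l0, hF0, rfl⟩)⟩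
    refine le_csInf (hne m) ?_
    rintro s ⟨l, hF, rfl⟩
    by_cases hc : ∀ i, (1:ℝ)/9 ≤ l i
    · have hsum : ∑ i, l i ≤ (m:ℝ)+1 := by
        have h2 := hF.2
        rwa [div_le_one (by positivity)] at h2
      exact hmin l hc hsum
    · push_neg at hc
      obtain ⟨i, hi⟩ := hc
      have h3 := sigma_spike l hF.1 i hi.le
      have h1le : sigmaB m l0 ≤ 2 := by
        have hone : ∀ i : Fin (m+1), (1:ℝ)/9 ≤ (fun _ => (1:ℝ)) i := fun _ => by norm_num
        have hsum1 : ∑ _i : Fin (m+1), (1:ℝ) ≤ (m:ℝ)+1 := by simp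
        exact le_trans (hmin (fun _ => 1) hone hsum1) sigma_one_le_two
      linarith
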